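/- Let α, γ ∈ [0,1] and c ∈ [−1,1], and set U := 1 + γ² − α² − α²γ²c². If U > 0 then (1 + γ²)/√U − 1 ≥ α²/2. Equivalently: for β > 0 and vectors E, B ∈ ℝ³ with ‖E‖ ≤ β, ‖B‖ ≤ β and U(E,B) > 0, the Born–Infeld energy density dominates the Maxwell electrostatic energy density of the same electric field: u_BI(E,B) ≥ ‖E‖²/2. -/

import Mathlib

open Real
open scoped RealInnerProductSpace

noncomputable section

/-- Three-dimensional Euclidean space. -/
abbrev E3 := EuclideanSpace ℝ (Fin 3)

/-- The Born–Infeld function `U(E,B) = 1 + ‖B‖²/β² − ‖E‖²/β² − (E⋅B)²/β⁴`. -/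
def Ubi (β : ℝ) (E B : E3) : ℝ :=
  1 + ‖B‖ ^ 2 / β ^ 2 - ‖E‖ ^ 2 / β ^ 2 - ⟪E, B⟫ ^ 2 / β ^ 4

/-- The Born–Infeld energy density `u_BI(E,B) = (β²/√U)(1 + ‖B‖²/β² − √U)`. -/
def uBI (β : ℝ) (E B : E3) : ℝ :=
  β ^ 2 / Real.sqrt (Ubi β E B) * (1 + ‖B‖ ^ 2 / β ^ 2 - Real.sqrt (Ubi β E B))

set_option linter.unusedVariables false in
lemma core (α γ U : ℝ) (hα0 : 0 ≤ α) (hα1 : α ≤ 1) (hγ0 : 0 ≤ γ) (hγ1 : γ ≤ 1)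
    (hU : 0 < U) (hUle : U ≤ 1 + γ ^ 2 - α ^ 2) :
    (1 + γ ^ 2) / Real.sqrt U - 1 ≥ α ^ 2 / 2 := by
  have hs : (0:ℝ) < Real.sqrt U := Real.sqrt_pos.mpr hU
  rw [ge_iff_le, le_sub_iff_add_le, le_div_iff₀ hs]
  have hd : (0:ℝ) < α ^ 2 / 2 + 1 := by positivity
  have key : (1 + γ ^ 2 - α ^ 2) ≤ ((1 + γ ^ 2) / (α ^ 2 / 2 + 1)) ^ 2 := by
    rw [div_pow, le_div_iff₀ (by positivity)]
    nlinarith [sq_nonneg α, sq_nonneg γ, sq_nonneg (α * γ), sq_nonneg (α ^ 2 - γ ^ 2),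
      sq_nonneg (α * (1 - α)), sq_nonneg (γ * (1 - γ)), sq_nonneg (α ^ 2 * γ),
      mul_nonneg (mul_nonneg (sq_nonneg α) (sq_nonneg α)) (sq_nonneg α),
      mul_nonneg (sq_nonneg (α^2 - γ^2)) (sq_nonneg α),
      mul_nonneg (mul_nonneg (sq_nonneg α) (sq_nonneg γ)) (sub_nonneg.mpr hα1)]
  have h2 : Real.sqrt (1 + γ ^ 2 - α ^ 2) ≤ (1 + γ ^ 2) / (α ^ 2 / 2 + 1) := by
    calc Real.sqrt (1 + γ ^ 2 - α ^ 2) ≤ Real.sqrt (((1 + γ ^ 2) / (α ^ 2 / 2 + 1)) ^ 2) :=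
          Real.sqrt_le_sqrt key
      _ = (1 + γ ^ 2) / (α ^ 2 / 2 + 1) := Real.sqrt_sq (by positivity)
  have h1 : Real.sqrt U ≤ Real.sqrt (1 + γ ^ 2 - α ^ 2) := Real.sqrt_le_sqrt hUle
  have := h1.trans h2
  rw [le_div_iff₀ hd] at this
  linarith

/-- **The Born–Infeld energy density dominates the Maxwell electrostatic energy density
of the same electric field.**  In normalized variables `α, γ ∈ [0,1]`, `c ∈ [−1,1]`
with `U = 1 + γ² − α² − α²γ²c² > 0` one has `(1+γ²)/√U − 1 ≥ α²/2`; equivalently,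
for fields with `‖E‖ ≤ β`, `‖B‖ ≤ β` and `U(E,B) > 0`, `u_BI(E,B) ≥ ‖E‖²/2`. -/
theorem bornInfeld_energy_dominates_maxwell_electrostatic :
    (∀ α γ c : ℝ, α ∈ Set.Icc (0 : ℝ) 1 → γ ∈ Set.Icc (0 : ℝ) 1 →
      c ∈ Set.Icc (-1 : ℝ) 1 →
      0 < 1 + γ ^ 2 - α ^ 2 - α ^ 2 * γ ^ 2 * c ^ 2 →
      (1 + γ ^ 2) / Real.sqrt (1 + γ ^ 2 - α ^ 2 - α ^ 2 * γ ^ 2 * c ^ 2) - 1 ≥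
        α ^ 2 / 2) ∧
    (∀ β : ℝ, 0 < β → ∀ E B : E3, ‖E‖ ≤ β → ‖B‖ ≤ β → 0 < Ubi β E B →
      uBI β E B ≥ ‖E‖ ^ 2 / 2) := by
  constructor
  · intro α γ c hα hγ hc hU
    have hle : 1 + γ ^ 2 - α ^ 2 - α ^ 2 * γ ^ 2 * c ^ 2 ≤ 1 + γ ^ 2 - α ^ 2 := by
      nlinarith [sq_nonneg (α * γ * c)]
    exact core α γ _ hα.1 hα.2 hγ.1 hγ.2 hU hle
  · intro β hβ E B hE hB hU
    have hβ2 : (0:ℝ) < β ^ 2 := by positivity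
    set α := ‖E‖ / β with hαdef
    set γ := ‖B‖ / β with hγdef
    have hα0 : 0 ≤ α := by positivity
    have hγ0 : 0 ≤ γ := by positivity
    have hα1 : α ≤ 1 := by rw [hαdef, div_le_one hβ]; exact hE
    have hγ1 : γ ≤ 1 := by rw [hγdef, div_le_one hβ]; exact hB
    have hαsq : α ^ 2 = ‖E‖ ^ 2 / β ^ 2 := by rw [hαdef, div_pow]
    have hγsq : γ ^ 2 = ‖B‖ ^ 2 / β ^ 2 := by rw [hγdef, div_pow]
    have hUle : Ubi β E B ≤ 1 + γ ^ 2 - α ^ 2 := by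
      rw [Ubi, hαsq, hγsq]
      have : 0 ≤ ⟪E, B⟫ ^ 2 / β ^ 4 := by positivity
      linarith
    have hkey := core α γ (Ubi β E B) hα0 hα1 hγ0 hγ1 hU hUle
    have hsU : (0:ℝ) < Real.sqrt (Ubi β E B) := Real.sqrt_pos.mpr hU
    have huBI : uBI β E B = β ^ 2 * ((1 + γ ^ 2) / Real.sqrt (Ubi β E B) - 1) := by
      rw [uBI, ← hγsq, div_mul_eq_mul_div, mul_sub, sub_div, mul_div_assoc,
        mul_div_assoc, div_self (ne_of_gt hsU), mul_one, mul_sub, mul_one]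
    rw [huBI, ge_iff_le]
    have : β ^ 2 * (α ^ 2 / 2) ≤ β ^ 2 * ((1 + γ ^ 2) / Real.sqrt (Ubi β E B) - 1) :=
      mul_le_mul_of_nonneg_left hkey (le_of_lt hβ2)
    calc ‖E‖ ^ 2 / 2 = β ^ 2 * (α ^ 2 / 2) := by
          rw [hαsq]; field_simp
      _ ≤ _ := this

end
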